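/- Let r,k be positive integers with r ≤ k, set a = r/k, and define Q(a,z) = Γ(a,z)/Γ(a). For all z ≥ 0, the two-sided bound 1 − (1 − exp(−Γ(1+a)^{−1/a} z))^a ≤ Q(a,z) ≤ 1 − (1 − e^{−z})^a holds. -/

import Mathlib

open MeasureTheory Real Filter ProbabilityTheory

/-- Upper incomplete Gamma function `Γ(a,x) = ∫_x^∞ e^{-t} t^{a-1} dt`. -/
noncomputable def upperGamma (a x : ℝ) : ℝ := ∫ t in Set.Ioi x, Real.exp (-t) * t ^ (a - 1)

/-- Regularized upper incomplete Gamma function `Q(a,x) = Γ(a,x)/Γ(a)`. -/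
noncomputable def regQ (a x : ℝ) : ℝ := upperGamma a x / Real.Gamma a

namespace StmtAux

open Set

/-! ### Elementary auxiliary function `mm t = 1/t - 1/(e^t - 1)` -/

noncomputable def mm (t : ℝ) : ℝ := 1/t - 1/(Real.exp t - 1)

lemma exp_sub_one_pos {t : ℝ} (ht : 0 < t) : 0 < Real.exp t - 1 := by
  have := Real.add_one_lt_exp (x := t) ht.ne'
  linarith

lemma mm_nonneg {t : ℝ} (ht : 0 < t) : 0 ≤ mm t := by
  have h1 : t ≤ Real.exp t - 1 := by have := Real.add_one_le_exp t; linarith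
  have h2 : 0 < Real.exp t - 1 := exp_sub_one_pos ht
  have := one_div_le_one_div_of_le ht h1
  unfold mm; linarith

lemma mm_hasDeriv {t : ℝ} (ht : 0 < t) :
    HasDerivAt mm (Real.exp t / (Real.exp t - 1)^2 - 1/t^2) t := by
  have h2 : 0 < Real.exp t - 1 := exp_sub_one_pos ht
  have hd1 : HasDerivAt (fun s : ℝ => 1/s) (-(1/t^2)) t := by
    simpa [one_div] using (hasDerivAt_inv ht.ne')
  have hd2 : HasDerivAt (fun s : ℝ => 1/(Real.exp s - 1))
      (-(Real.exp t)/(Real.exp t - 1)^2) t := by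
    simpa [one_div] using ((Real.hasDerivAt_exp t).sub_const 1).fun_inv h2.ne'
  have : HasDerivAt (fun s : ℝ => 1/s - 1/(Real.exp s - 1)) _ t := hd1.fun_sub hd2
  convert this using 1
  · rfl
  ring

lemma mm_deriv_nonpos {t : ℝ} (ht : 0 < t) :
    Real.exp t / (Real.exp t - 1)^2 - 1/t^2 ≤ 0 := by
  have h2 : 0 < Real.exp t - 1 := exp_sub_one_pos ht
  have hs : t/2 < Real.sinh (t/2) := (Real.self_lt_sinh_iff).2 (by linarith)
  have hu : Real.exp (t/2) * Real.exp (t/2) = Real.exp t := by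
    rw [← Real.exp_add]; ring_nf
  have hui : Real.exp (t/2) * Real.exp (-(t/2)) = 1 := by
    rw [← Real.exp_add]; simp
  have hsinh : Real.sinh (t/2) = (Real.exp (t/2) - Real.exp (-(t/2)))/2 := by
    rw [Real.sinh_eq]
  have hup : 0 < Real.exp (t/2) := Real.exp_pos _
  have key : t * Real.exp (t/2) ≤ Real.exp t - 1 := by
    nlinarith [hup, hs, hsinh, hu, hui]
  have key2 : t^2 * Real.exp t ≤ (Real.exp t - 1)^2 := by
    nlinarith [mul_le_mul key key (by positivity : (0:ℝ) ≤ t * Real.exp (t/2)) h2.le, hu,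
      sq_nonneg t]
  rw [sub_nonpos, div_le_div_iff₀ (by positivity) (by positivity)]
  nlinarith [key2]

lemma mm_anti : AntitoneOn mm (Ioi (0:ℝ)) := by
  have hint : interior (Ioi (0:ℝ)) = Ioi 0 := interior_Ioi
  refine antitoneOn_of_deriv_nonpos (convex_Ioi 0)
    (fun x hx => (mm_hasDeriv hx).continuousAt.continuousWithinAt) ?_ ?_
  · rw [hint]; exact fun x hx => (mm_hasDeriv hx).differentiableAt.differentiableWithinAt
  · rw [hint]; intro x hx
    rw [(mm_hasDeriv hx).deriv]
    exact mm_deriv_nonpos hx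

/-! ### MVT-based sign-change lemmas -/

lemma key_lemma (D D' : ℝ → ℝ) (hd : ∀ x ∈ Ioi (0:ℝ), HasDerivAt D (D' x) x)
    (hanti : AntitoneOn D' (Ioi 0)) (hlim : Tendsto D (nhdsWithin 0 (Ioi 0)) (nhds 0))
    {x y : ℝ} (hx : 0 < x) (hxy : x ≤ y) (hDx : D x < 0) : D y < 0 := by
  rcases eq_or_lt_of_le hxy with rfl | hlt
  · exact hDx
  by_contra hDy
  push_neg at hDy
  have hcont : ∀ s : Set ℝ, s ⊆ Ioi (0:ℝ) → ContinuousOn D s :=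
    fun s hs t hts => ((hd t (hs hts)).continuousAt).continuousWithinAt
  obtain ⟨c, hc, hc'⟩ := exists_hasDerivAt_eq_slope D D' hlt
    (hcont _ (fun t ht => lt_of_lt_of_le hx ht.1))
    (fun t ht => hd t (lt_trans hx ht.1))
  have hcpos : 0 < D' c := by
    rw [hc']
    apply div_pos (by linarith) (by linarith)
  have h1 : ∀ᶠ t in nhdsWithin (0:ℝ) (Ioi 0), D x < D t :=
    hlim.eventually (eventually_gt_nhds hDx)
  have h2 : ∀ᶠ t in nhdsWithin (0:ℝ) (Ioi 0), t < x :=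
    eventually_of_mem (Ioo_mem_nhdsGT_of_mem ⟨le_refl _, hx⟩) (fun t ht => ht.2)
  have h3 : ∀ᶠ t in nhdsWithin (0:ℝ) (Ioi 0), 0 < t := self_mem_nhdsWithin
  obtain ⟨ε, ⟨hε1, hε2⟩, hε3⟩ := ((h1.and h2).and h3).exists
  obtain ⟨c', hc'mem, hc''⟩ := exists_hasDerivAt_eq_slope D D' hε2
    (hcont _ (fun t ht => lt_of_lt_of_le hε3 ht.1))
    (fun t ht => hd t (lt_trans hε3 ht.1))
  have hcneg : D' c' < 0 := by
    rw [hc'']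
    apply div_neg_of_neg_of_pos (by linarith [hε1]) (by linarith [hc'mem.1, hc'mem.2])
  have : D' c ≤ D' c' :=
    hanti (lt_trans hε3 hc'mem.1) (lt_trans hx hc.1) (le_of_lt (lt_trans hc'mem.2 hc.1))
  linarith

lemma core (h h' : ℝ → ℝ) (hc : ContinuousOn h (Ici 0))
    (hd : ∀ x ∈ Ioi (0:ℝ), HasDerivAt h (h' x) x)
    (h0 : h 0 = 0) (hlim : Tendsto h atTop (nhds 0)) {y : ℝ} (hy : 0 < y)
    (hsign : (∀ x ∈ Ioc 0 y, 0 ≤ h' x) ∨ (∀ x ∈ Ici y, h' x ≤ 0)) : 0 ≤ h y := by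
  rcases hsign with hs | hs
  · have hmono : MonotoneOn h (Icc 0 y) := by
      apply monotoneOn_of_deriv_nonneg (convex_Icc 0 y) (hc.mono Icc_subset_Ici_self)
      · rw [interior_Icc]
        exact fun x hx => (hd x hx.1).differentiableAt.differentiableWithinAt
      · rw [interior_Icc]
        intro x hx
        rw [(hd x hx.1).deriv]
        exact hs x ⟨hx.1, hx.2.le⟩
    have := hmono (left_mem_Icc.2 hy.le) (right_mem_Icc.2 hy.le) hy.le
    linarith [h0 ▸ this]
  · have hanti : AntitoneOn h (Ici y) := by
      apply antitoneOn_of_deriv_nonpos (convex_Ici y)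
        (hc.mono (fun t ht => le_trans hy.le ht))
      · rw [interior_Ici]
        exact fun x hx => (hd x (lt_trans hy hx)).differentiableAt.differentiableWithinAt
      · rw [interior_Ici]
        intro x hx
        rw [(hd x (lt_trans hy hx)).deriv]
        exact hs x (show y ≤ x from le_of_lt hx)
    refine le_of_tendsto hlim ?_
    filter_upwards [eventually_ge_atTop y] with T hT
    exact hanti (self_mem_Ici) hT hT

/-! ### The lower incomplete gamma function and comparison functions -/

noncomputable def ff (a t : ℝ) : ℝ := Real.exp (-t) * t ^ (a - 1)
noncomputable def G (a x : ℝ) : ℝ := ∫ t in Set.Ioc 0 x, ff a t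
noncomputable def P (a x : ℝ) : ℝ := G a x / Real.Gamma a
noncomputable def W (a α x : ℝ) : ℝ := (1 - Real.exp (-(α * x))) ^ a

variable {a α x z : ℝ}

lemma ff_integrableOn (ha : 0 < a) : IntegrableOn (ff a) (Ioi 0) :=
  Real.GammaIntegral_convergent ha

lemma ff_intInt (ha : 0 < a) (hx : 0 ≤ x) : IntervalIntegrable (ff a) volume 0 x := by
  rw [intervalIntegrable_iff_integrableOn_Ioc_of_le hx]
  exact (ff_integrableOn ha).mono_set Ioc_subset_Ioi_self

lemma ff_contOn : ContinuousOn (ff a) (Ioi 0) := by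
  intro t ht
  exact (((Real.continuous_exp.comp continuous_neg).continuousAt).mul
    ((Real.continuousAt_rpow_const t (a-1) (Or.inl (ne_of_gt ht))))).continuousWithinAt

lemma G_eq_interval (hx : 0 ≤ x) : G a x = ∫ t in (0:ℝ)..x, ff a t :=
  (intervalIntegral.integral_of_le hx).symm

lemma G_hasDeriv (ha : 0 < a) (hx : 0 < x) : HasDerivAt (G a) (ff a x) x := by
  have H : HasDerivAt (fun u => ∫ t in (0:ℝ)..u, ff a t) (ff a x) x := by
    apply intervalIntegral.integral_hasDerivAt_right (ff_intInt ha hx.le)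
    · exact ⟨Ioi 0, Ioi_mem_nhds hx, ff_contOn.aestronglyMeasurable measurableSet_Ioi⟩
    · exact (ff_contOn x hx).continuousAt (Ioi_mem_nhds hx)
  apply H.congr_of_eventuallyEq
  filter_upwards [Ioi_mem_nhds hx] with u hu
  exact G_eq_interval (le_of_lt hu)

lemma G_contOn (ha : 0 < a) (T : ℝ) : ContinuousOn (G a) (Icc 0 T) := by
  apply intervalIntegral.continuousOn_primitive
  rw [integrableOn_Icc_iff_integrableOn_Ioc]
  exact (ff_integrableOn ha).mono_set Ioc_subset_Ioi_self

lemma G_contOn_Ici (ha : 0 < a) : ContinuousOn (G a) (Ici 0) := by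
  intro x hx
  have h := (G_contOn ha (x+1)) x ⟨hx, by linarith [mem_Ici.1 hx]⟩
  apply h.mono_of_mem_nhdsWithin
  have : Icc (0:ℝ) (x+1) = Ici 0 ∩ Iic (x+1) := (Ici_inter_Iic).symm
  rw [this]
  exact inter_mem_nhdsWithin _ (Iic_mem_nhds (by linarith [mem_Ici.1 hx]))

lemma G_tendsto (ha : 0 < a) : Tendsto (G a) atTop (nhds (Real.Gamma a)) := by
  have H := MeasureTheory.intervalIntegral_tendsto_integral_Ioi 0
    (ff_integrableOn ha) (tendsto_id (α := ℝ) (x := atTop))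
  simp only [ff] at H
  rw [Real.Gamma_eq_integral ha]
  apply H.congr'
  filter_upwards [eventually_ge_atTop (0:ℝ)] with u hu
  rw [G_eq_interval hu]; rfl

lemma G_zero : G a 0 = 0 := by simp [G]

lemma P_zero : P a 0 = 0 := by simp [P, G_zero]

lemma P_tendsto (ha : 0 < a) : Tendsto (P a) atTop (nhds 1) := by
  have := (G_tendsto ha).div_const (Real.Gamma a)
  rwa [div_self (Real.Gamma_pos_of_pos ha).ne'] at this

lemma P_hasDeriv (ha : 0 < a) (hx : 0 < x) :
    HasDerivAt (P a) (ff a x / Real.Gamma a) x :=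
  (G_hasDeriv ha hx).div_const _

lemma P_contOn_Ici (ha : 0 < a) : ContinuousOn (P a) (Ici 0) :=
  (G_contOn_Ici ha).div_const _

lemma one_sub_exp_pos (hα : 0 < α) (hx : 0 < x) : 0 < 1 - Real.exp (-(α * x)) := by
  have : Real.exp (-(α * x)) < 1 := Real.exp_lt_one_iff.2 (by nlinarith)
  linarith

lemma W_inner_hasDeriv (hα : 0 < α) :
    HasDerivAt (fun x : ℝ => 1 - Real.exp (-(α * x))) (α * Real.exp (-(α * x))) x := by
  have h1 : HasDerivAt (fun x : ℝ => -(α * x)) (-α) x := by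
    simpa using ((hasDerivAt_id x).const_mul α).fun_neg
  have h2 : HasDerivAt (fun x : ℝ => 1 - Real.exp (-(α * x))) _ x := (h1.exp).const_sub 1
  convert h2 using 1
  ring

lemma W_hasDeriv (ha : 0 < a) (hα : 0 < α) (hx : 0 < x) :
    HasDerivAt (W a α)
      (a * (1 - Real.exp (-(α * x))) ^ (a - 1) * (α * Real.exp (-(α * x)))) x := by
  have hb := one_sub_exp_pos hα hx
  have houter := Real.hasDerivAt_rpow_const
    (x := 1 - Real.exp (-(α * x))) (p := a) (Or.inl hb.ne')
  exact houter.comp x (W_inner_hasDeriv hα)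

lemma W_contOn_Ici (ha : 0 < a) : ContinuousOn (W a α) (Ici 0) := by
  intro x _
  have hinner : Continuous (fun x : ℝ => 1 - Real.exp (-(α * x))) := by fun_prop
  apply ContinuousAt.continuousWithinAt
  rcases eq_or_ne (1 - Real.exp (-(α * x))) 0 with h | h
  · exact hinner.continuousAt.rpow_const (Or.inr ha.le)
  · exact hinner.continuousAt.rpow_const (Or.inl h)

lemma W_zero (ha : 0 < a) : W a α 0 = 0 := by
  simp [W, Real.zero_rpow ha.ne']

lemma W_tendsto (ha : 0 < a) (hα : 0 < α) : Tendsto (W a α) atTop (nhds 1) := by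
  have h1 : Tendsto (fun x : ℝ => 1 - Real.exp (-(α * x))) atTop (nhds 1) := by
    have hmul : Tendsto (fun x : ℝ => α * x) atTop atTop :=
      Filter.tendsto_const_mul_atTop_of_pos hα |>.2 tendsto_id
    have hexp : Tendsto (fun x : ℝ => Real.exp (-(α * x))) atTop (nhds 0) :=
      Real.tendsto_exp_neg_atTop_nhds_zero.comp hmul
    have := tendsto_const_nhds (x := (1:ℝ)) (f := atTop (α := ℝ)) |>.sub hexp
    simpa using this
  have h2 : ContinuousAt (fun u : ℝ => u ^ a) 1 :=
    Real.continuousAt_rpow_const 1 a (Or.inl one_ne_zero)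
  have := h2.tendsto.comp h1
  rwa [Real.one_rpow] at this

/-! ### The logarithmic comparison function `DD` -/

noncomputable def DD (a α x : ℝ) : ℝ :=
  Real.log (Real.Gamma (a+1) * α) + (1-α)*x
    + (a-1)*(Real.log (1 - Real.exp (-(α*x))) - Real.log x)

noncomputable def DD' (a α x : ℝ) : ℝ := (1-α) + (1-a)*α*mm (α*x)

lemma DD_hasDeriv (ha : 0 < a) (hα : 0 < α) (hx : 0 < x) :
    HasDerivAt (DD a α) (DD' a α x) x := by
  have hb := one_sub_exp_pos hα hx
  have h1 : HasDerivAt (fun x : ℝ => (1-α)*x) (1-α) x := by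
    simpa using (hasDerivAt_id x).const_mul (1-α)
  have h2 : HasDerivAt (fun x : ℝ => Real.log (1 - Real.exp (-(α*x))))
      ((α * Real.exp (-(α*x))) / (1 - Real.exp (-(α*x)))) x :=
    (W_inner_hasDeriv hα).log hb.ne'
  have h3 : HasDerivAt Real.log x⁻¹ x := Real.hasDerivAt_log hx.ne'
  have H : HasDerivAt (fun x => Real.log (Real.Gamma (a+1) * α)
      + (1-α)*x + (a-1)*(Real.log (1 - Real.exp (-(α*x))) - Real.log x)) _ x :=
    ((h1.const_add (Real.log (Real.Gamma (a+1) * α))).fun_add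
    (((h2.fun_sub h3)).const_mul (a-1)))
  convert H using 1
  · rfl
  have hE1 : 0 < Real.exp (α*x) - 1 := exp_sub_one_pos (mul_pos hα hx)
  have hinv : Real.exp (-(α*x)) = (Real.exp (α*x))⁻¹ := by
    rw [← Real.exp_neg]
  unfold DD' mm
  rw [hinv]
  field_simp
  ring

lemma DD'_anti (ha1 : a ≤ 1) (hα : 0 < α) : AntitoneOn (DD' a α) (Ioi (0:ℝ)) := by
  intro x hx y hy hxy
  have h := mm_anti (mul_pos hα hx) (mul_pos hα hy) (by nlinarith [mem_Ioi.1 hx])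
  unfold DD'
  nlinarith [mul_nonneg (mul_nonneg (by linarith : (0:ℝ) ≤ 1-a) hα.le) (sub_nonneg.2 h)]

lemma DD_mono_one (ha : 0 < a) (ha1 : a ≤ 1) : MonotoneOn (DD a 1) (Ioi (0:ℝ)) := by
  have hint : interior (Ioi (0:ℝ)) = Ioi 0 := interior_Ioi
  refine monotoneOn_of_deriv_nonneg (convex_Ioi 0)
    (fun x hx => (DD_hasDeriv ha one_pos hx).continuousAt.continuousWithinAt) ?_ ?_
  · rw [hint]
    exact fun x hx => (DD_hasDeriv ha one_pos hx).differentiableAt.differentiableWithinAt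
  · rw [hint]; intro x hx
    rw [(DD_hasDeriv ha one_pos hx).deriv]
    have := mm_nonneg (t := 1*x) (by simpa using (mem_Ioi.1 hx))
    unfold DD'
    nlinarith [this]

lemma DD_tendsto (ha : 0 < a) (hα : 0 < α) :
    Tendsto (DD a α) (nhdsWithin 0 (Ioi 0))
      (nhds (Real.log (Real.Gamma (a+1)) + a * Real.log α)) := by
  set q : ℝ → ℝ := fun x => 1 - Real.exp (-(α*x)) with hq_def
  have hq : HasDerivAt q α 0 := by
    have := W_inner_hasDeriv (x := 0) hα
    simpa using this
  have hslope : Tendsto (fun t => q t / t) (nhdsWithin 0 (Ioi 0)) (nhds α) := by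
    have H := hasDerivAt_iff_tendsto_slope.1 hq
    have H2 := H.mono_left (nhdsWithin_mono 0 (fun t (ht : t ∈ Ioi (0:ℝ)) => ne_of_gt ht))
    apply H2.congr'
    filter_upwards [self_mem_nhdsWithin] with t ht
    rw [slope_def_field]
    simp [hq_def]
  have hlog : Tendsto (fun x => Real.log (1 - Real.exp (-(α*x))) - Real.log x)
      (nhdsWithin 0 (Ioi 0)) (nhds (Real.log α)) := by
    have hcomp := ((Real.continuousAt_log hα.ne').tendsto).comp hslope
    apply hcomp.congr'
    filter_upwards [self_mem_nhdsWithin] with t (ht : (0:ℝ) < t)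
    simp only [Function.comp]
    rw [← Real.log_div (one_sub_exp_pos hα ht).ne' ht.ne']
  have hlin : Tendsto (fun x : ℝ => (1-α)*x) (nhdsWithin 0 (Ioi 0)) (nhds 0) := by
    have : Tendsto (fun x : ℝ => (1-α)*x) (nhds 0) (nhds ((1-α)*0)) :=
      (continuous_const.mul continuous_id).tendsto 0
    rw [mul_zero] at this
    exact this.mono_left nhdsWithin_le_nhds
  have H := (tendsto_const_nhds (x := Real.log (Real.Gamma (a+1) * α))).add hlin |>.add
    (hlog.const_mul (a-1))
  have heq : Real.log (Real.Gamma (a+1) * α) + 0 + (a-1) * Real.log α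
      = Real.log (Real.Gamma (a+1)) + a * Real.log α := by
    rw [Real.log_mul (Real.Gamma_pos_of_pos (by linarith)).ne' hα.ne']
    ring
  rw [heq] at H
  exact H

lemma DD_eq (x : ℝ) : DD a α x =
    (Real.log (Real.Gamma (a+1) * α) + (-(α*x)) + (a-1)*Real.log (1 - Real.exp (-(α*x))))
      - (-x + (a-1)*Real.log x) := by
  unfold DD; ring

lemma W_deriv_eq_exp (ha : 0 < a) (hα : 0 < α) (hx : 0 < x) :
    a * (1 - Real.exp (-(α * x))) ^ (a - 1) * (α * Real.exp (-(α * x)))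
      = Real.exp (Real.log (Real.Gamma (a+1) * α) + (-(α*x))
          + (a-1)*Real.log (1 - Real.exp (-(α*x)))) / Real.Gamma a := by
  have hb := one_sub_exp_pos hα hx
  have hΓ : 0 < Real.Gamma a := Real.Gamma_pos_of_pos ha
  have hΓ1 : Real.Gamma (a+1) = a * Real.Gamma a := Real.Gamma_add_one ha.ne'
  rw [Real.exp_add, Real.exp_add, Real.exp_log (by positivity), Real.rpow_def_of_pos hb,
    mul_comm (Real.log (1 - Real.exp (-(α*x)))) (a-1), hΓ1]
  field_simp

lemma ff_eq_exp (hx : 0 < x) :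
    ff a x = Real.exp (-x + (a-1)*Real.log x) := by
  rw [ff, Real.exp_add, Real.rpow_def_of_pos hx, mul_comm (Real.log x) (a-1)]

/-! ### The two main inequalities -/

theorem P_lower (ha : 0 < a) (ha1 : a ≤ 1) (hz : 0 ≤ z) : W a 1 z ≤ P a z := by
  rcases eq_or_lt_of_le hz with rfl | hz'
  · rw [W_zero ha, P_zero]
  have hΓ : 0 < Real.Gamma a := Real.Gamma_pos_of_pos ha
  set h' : ℝ → ℝ := fun x => ff a x / Real.Gamma a
    - a * (1 - Real.exp (-(1 * x))) ^ (a - 1) * (1 * Real.exp (-(1 * x))) with hh'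
  have hkey : ∀ x, 0 < x → h' x =
      (Real.exp (-x + (a-1)*Real.log x)
        - Real.exp (Real.log (Real.Gamma (a+1) * 1) + (-(1*x))
            + (a-1)*Real.log (1 - Real.exp (-(1*x))))) / Real.Gamma a := by
    intro x hx
    rw [hh']
    simp only []
    rw [W_deriv_eq_exp ha one_pos hx, ff_eq_exp hx, div_sub_div_same]
  have hsub : 0 ≤ P a z - W a 1 z := by
    apply core (fun x => P a x - W a 1 x) h'
      ((P_contOn_Ici ha).sub (W_contOn_Ici ha))
      (fun x hx => (P_hasDeriv ha hx).sub (W_hasDeriv ha one_pos hx))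
      (by show P a 0 - W a 1 0 = 0; rw [P_zero, W_zero ha]; ring)
      (by simpa using (P_tendsto ha).sub (W_tendsto ha one_pos)) hz'
    by_cases hD : DD a 1 z ≤ 0
    · left
      intro x hx
      have h1 : DD a 1 x ≤ DD a 1 z := DD_mono_one ha ha1 hx.1 hz' hx.2
      rw [hkey x hx.1]
      apply div_nonneg _ hΓ.le
      rw [sub_nonneg]
      apply Real.exp_le_exp.2
      have h2 := DD_eq (a := a) (α := 1) x
      linarith
    · right
      push_neg at hD
      intro x hx
      have h1 : DD a 1 z ≤ DD a 1 x := DD_mono_one ha ha1 hz' (lt_of_lt_of_le hz' hx) hx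
      rw [hkey x (lt_of_lt_of_le hz' hx)]
      apply div_nonpos_of_nonpos_of_nonneg _ hΓ.le
      rw [sub_nonpos]
      apply Real.exp_le_exp.2
      have h2 := DD_eq (a := a) (α := 1) x
      linarith
  linarith

theorem P_upper (ha : 0 < a) (ha1 : a ≤ 1) (hα : 0 < α)
    (hcrit : Real.log (Real.Gamma (a+1)) + a * Real.log α = 0) (hz : 0 ≤ z) :
    P a z ≤ W a α z := by
  rcases eq_or_lt_of_le hz with rfl | hz'
  · rw [W_zero ha, P_zero]
  have hΓ : 0 < Real.Gamma a := Real.Gamma_pos_of_pos ha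
  have hDtend : Tendsto (DD a α) (nhdsWithin 0 (Ioi 0)) (nhds 0) := by
    have := DD_tendsto ha hα
    rwa [hcrit] at this
  have hK : ∀ {x y : ℝ}, 0 < x → x ≤ y → DD a α x < 0 → DD a α y < 0 :=
    fun {x y} hx hxy hDx => key_lemma (DD a α) (DD' a α)
      (fun t ht => DD_hasDeriv ha hα ht) (DD'_anti ha1 hα) hDtend hx hxy hDx
  set h' : ℝ → ℝ := fun x =>
    a * (1 - Real.exp (-(α * x))) ^ (a - 1) * (α * Real.exp (-(α * x)))
      - ff a x / Real.Gamma a with hh'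
  have hkey : ∀ x, 0 < x → h' x =
      (Real.exp (Real.log (Real.Gamma (a+1) * α) + (-(α*x))
            + (a-1)*Real.log (1 - Real.exp (-(α*x))))
        - Real.exp (-x + (a-1)*Real.log x)) / Real.Gamma a := by
    intro x hx
    rw [hh']
    simp only []
    rw [W_deriv_eq_exp ha hα hx, ff_eq_exp hx, div_sub_div_same]
  have hsub : 0 ≤ W a α z - P a z := by
    apply core (fun x => W a α x - P a x) h'
      ((W_contOn_Ici ha).sub (P_contOn_Ici ha))
      (fun x hx => (W_hasDeriv ha hα hx).sub (P_hasDeriv ha hx))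
      (by show W a α 0 - P a 0 = 0; rw [P_zero, W_zero ha]; ring)
      (by simpa using (W_tendsto ha hα).sub (P_tendsto ha)) hz'
    by_cases hD : 0 ≤ DD a α z
    · left
      intro x hx
      have h1 : 0 ≤ DD a α x := by
        by_contra hneg
        push_neg at hneg
        exact absurd hD (not_le.2 (hK hx.1 hx.2 hneg))
      rw [hkey x hx.1]
      apply div_nonneg _ hΓ.le
      rw [sub_nonneg]
      apply Real.exp_le_exp.2
      have h2 := DD_eq (a := a) (α := α) x
      linarith
    · right
      push_neg at hD
      intro x hx
      have h1 : DD a α x < 0 := hK hz' hx hD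
      rw [hkey x (lt_of_lt_of_le hz' hx)]
      apply div_nonpos_of_nonpos_of_nonneg _ hΓ.le
      rw [sub_nonpos]
      apply Real.exp_le_exp.2
      have h2 := DD_eq (a := a) (α := α) x
      linarith
  linarith

/-! ### Relating `regQ` to `P` -/

lemma regQ_eq (ha : 0 < a) (hz : 0 ≤ z) : regQ a z = 1 - P a z := by
  have hΓ : 0 < Real.Gamma a := Real.Gamma_pos_of_pos ha
  have hsplit : Real.Gamma a = G a z + upperGamma a z := by
    rw [Real.Gamma_eq_integral ha, ← Ioc_union_Ioi_eq_Ioi hz]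
    show (∫ t in Ioc 0 z ∪ Ioi z, ff a t) = _
    rw [MeasureTheory.setIntegral_union (Ioc_disjoint_Ioi le_rfl) measurableSet_Ioi
      ((ff_integrableOn ha).mono_set Ioc_subset_Ioi_self)
      ((ff_integrableOn ha).mono_set (Ioi_subset_Ioi hz))]
    rfl
  have hU : upperGamma a z = Real.Gamma a - G a z := by linarith
  unfold regQ P
  rw [hU]
  field_simp

end StmtAux

theorem stmt5 (r k : ℕ) (hr : 0 < r) (hrk : r ≤ k) (z : ℝ) (hz : 0 ≤ z) :
    1 - (1 - Real.exp (-(Real.Gamma (1 + (r : ℝ) / k) ^ (-((k : ℝ) / r)) * z))) ^ ((r : ℝ) / k)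
        ≤ regQ ((r : ℝ) / k) z ∧
      regQ ((r : ℝ) / k) z ≤ 1 - (1 - Real.exp (-z)) ^ ((r : ℝ) / k) := by
  have hk : 0 < k := lt_of_lt_of_le hr hrk
  have hr' : (0:ℝ) < r := by exact_mod_cast hr
  have hk' : (0:ℝ) < k := by exact_mod_cast hk
  set a : ℝ := (r : ℝ) / k with ha_def
  have ha : 0 < a := div_pos hr' hk'
  have ha1 : a ≤ 1 := by
    rw [ha_def, div_le_one hk']
    exact_mod_cast hrk
  set α : ℝ := Real.Gamma (1 + a) ^ (-((k : ℝ) / r)) with hα_def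
  have hΓ1a : 0 < Real.Gamma (1 + a) := Real.Gamma_pos_of_pos (by linarith)
  have hα : 0 < α := Real.rpow_pos_of_pos hΓ1a _
  have hcrit : Real.log (Real.Gamma (a+1)) + a * Real.log α = 0 := by
    rw [hα_def, Real.log_rpow hΓ1a, add_comm 1 a]
    have hak : a * ((k:ℝ)/r) = 1 := by
      rw [ha_def]
      field_simp
    linear_combination (-(Real.log (Real.Gamma (a+1)))) * hak
  have h1 := StmtAux.P_lower ha ha1 hz
  have h2 := StmtAux.P_upper ha ha1 hα hcrit hz
  rw [StmtAux.regQ_eq ha hz]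
  constructor
  · have h2' : StmtAux.P a z ≤ (1 - Real.exp (-(α * z))) ^ a := h2
    linarith
  · have h1' : (1 - Real.exp (-z)) ^ a ≤ StmtAux.P a z := by
      have : StmtAux.W a 1 z = (1 - Real.exp (-z)) ^ a := by rw [StmtAux.W, one_mul]
      linarith [this ▸ h1]
    linarith
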